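/- Let m ≥ 1 and let P(z) = z^m·Q(z) + e^{iθ}·Q*(z), where Q is a polynomial of degree m with Q(0) ≠ 0, all roots of Q lie strictly inside the open unit disk, θ ∈ ℝ, and Q*(z) = z^m·conj(Q)(1/z̄). Then P has no roots in the region |z| > 1. -/

import Mathlib

lemma eval₂_id' (p : Polynomial ℂ) (x : ℂ) :
    Polynomial.eval₂ (RingHom.id ℂ) x p = p.eval x := by
  rw [← Polynomial.eval_map, Polynomial.map_id]

/-- Blaschke-type estimate: if |ρ| < 1 < |z| then |1 - ρ·conj z| < |z - ρ|. -/
lemma blaschke_key {ρ z : ℂ} (hρ : ‖ρ‖ < 1) (hz : 1 < ‖z‖) :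
    ‖1 - ρ * (starRingEnd ℂ) z‖ < ‖z - ρ‖ := by
  have h1 : Complex.normSq ρ < 1 := by
    have := Complex.sq_norm ρ
    nlinarith [norm_nonneg ρ]
  have h2 : 1 < Complex.normSq z := by
    have := Complex.sq_norm z
    nlinarith [norm_nonneg z]
  have hsq : Complex.normSq (1 - ρ * (starRingEnd ℂ) z) < Complex.normSq (z - ρ) := by
    simp only [Complex.normSq_apply, Complex.sub_re, Complex.sub_im, Complex.mul_re,
      Complex.mul_im, Complex.one_re, Complex.one_im, Complex.conj_re, Complex.conj_im] at *
    nlinarith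
  have e1 := Complex.sq_norm (1 - ρ * (starRingEnd ℂ) z)
  have e2 := Complex.sq_norm (z - ρ)
  nlinarith [norm_nonneg (1 - ρ * (starRingEnd ℂ) z), norm_nonneg (z - ρ)]

/-- Strict product inequality over a nonempty multiset. -/
lemma prod_lt_prod_aux (s : Multiset ℂ) (f g : ℂ → ℝ) (hs : s ≠ 0)
    (h0 : ∀ ρ ∈ s, 0 ≤ g ρ) (h : ∀ ρ ∈ s, g ρ < f ρ) :
    (s.map g).prod < (s.map f).prod := by
  induction s using Multiset.induction with
  | empty => exact absurd rfl hs
  | cons ρ t ih =>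
    simp only [Multiset.map_cons, Multiset.prod_cons]
    rcases eq_or_ne t 0 with rfl | ht
    · simpa using h ρ (Multiset.mem_cons_self _ _)
    · have hgt : (t.map g).prod < (t.map f).prod :=
        ih ht (fun x hx => h0 x (Multiset.mem_cons_of_mem hx))
          (fun x hx => h x (Multiset.mem_cons_of_mem hx))
      have hg0 : (0:ℝ) ≤ (t.map g).prod :=
        Multiset.prod_nonneg (by
          intro x hx
          obtain ⟨y, hy, rfl⟩ := Multiset.mem_map.mp hx
          exact h0 y (Multiset.mem_cons_of_mem hy))
      exact mul_lt_mul'' (h ρ (Multiset.mem_cons_self ρ t)) hgt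
        (h0 ρ (Multiset.mem_cons_self ρ t)) hg0

/-- If Q has degree m, Q(0) ≠ 0 and all roots strictly inside the unit disk, then
P(z) = z^m·Q(z) + e^{iθ}·Q*(z) has no roots in |z| > 1. -/
theorem stmt_19 (m : ℕ) (hm : 1 ≤ m) (Q : Polynomial ℂ) (hdeg : Q.natDegree = m)
    (h0 : Q.coeff 0 ≠ 0) (hroots : ∀ z : ℂ, Q.eval z = 0 → ‖z‖ < 1) (θ : ℝ) :
    ∀ z : ℂ, 1 < ‖z‖ →
      z ^ m * Q.eval z +
        Complex.exp (θ * Complex.I) * ((Q.map (starRingEnd ℂ)).reverse).eval z ≠ 0 := by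
  intro z hz hcontra
  have hQ0 : Q ≠ 0 := fun h => h0 (by simp [h])
  have hz0 : z ≠ 0 := by
    intro h
    rw [h] at hz
    simp at hz
    linarith
  set s := Q.roots with hs
  have hsplit : Q.Splits := IsAlgClosed.splits Q
  have hcard : Multiset.card s = m := by
    rw [hs, ← hdeg]
    exact Polynomial.splits_iff_card_roots.mp hsplit
  have hsne : s ≠ 0 := by
    intro h
    rw [h] at hcard
    simp at hcard
    omega
  have hQfact : Q = Polynomial.C Q.leadingCoeff *
      (s.map fun ρ => Polynomial.X - Polynomial.C ρ).prod :=
    Polynomial.Splits.eq_prod_roots hsplit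
  have ha : Q.leadingCoeff ≠ 0 := Polynomial.leadingCoeff_ne_zero.mpr hQ0
  set a := Q.leadingCoeff with haa
  -- eval formula
  have heval : ∀ w : ℂ, Q.eval w = a * (s.map fun ρ => w - ρ).prod := by
    intro w
    conv_lhs => rw [hQfact]
    rw [Polynomial.eval_mul, Polynomial.eval_C, Polynomial.eval_multiset_prod,
      Multiset.map_map]
    simp [Function.comp]
  -- roots in the unit disk
  have hmem : ∀ ρ ∈ s, ‖ρ‖ < 1 := fun ρ hρ =>
    hroots ρ ((Polynomial.mem_roots hQ0).mp hρ)
  -- conjugate evaluation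
  have hconj : ∀ w : ℂ, (Q.map (starRingEnd ℂ)).eval w =
      (starRingEnd ℂ) (Q.eval ((starRingEnd ℂ) w)) := by
    intro w
    rw [Polynomial.eval_map, ← eval₂_id' Q ((starRingEnd ℂ) w), Polynomial.hom_eval₂]
    simp
  -- reverse evaluation
  have hrev : ((Q.map (starRingEnd ℂ)).reverse).eval z =
      z ^ m * (Q.map (starRingEnd ℂ)).eval z⁻¹ := by
    haveI : Invertible (z⁻¹) := invertibleOfNonzero (inv_ne_zero hz0)
    have h1 := Polynomial.eval₂_reverse_mul_pow (RingHom.id ℂ) (z⁻¹) (Q.map (starRingEnd ℂ))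
    rw [invOf_eq_inv, inv_inv] at h1
    have hn : (Q.map (starRingEnd ℂ)).natDegree = m := by
      rw [Polynomial.natDegree_map, hdeg]
    rw [hn, eval₂_id', eval₂_id'] at h1
    have h2 : (z⁻¹) ^ m * z ^ m = 1 := by
      rw [← mul_pow, inv_mul_cancel₀ hz0, one_pow]
    calc ((Q.map (starRingEnd ℂ)).reverse).eval z
        = ((Q.map (starRingEnd ℂ)).reverse).eval z * ((z⁻¹) ^ m * z ^ m) := by
          rw [h2, mul_one]
      _ = (((Q.map (starRingEnd ℂ)).reverse).eval z * (z⁻¹) ^ m) * z ^ m := by ring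
      _ = (Q.map (starRingEnd ℂ)).eval z⁻¹ * z ^ m := by rw [h1]
      _ = z ^ m * (Q.map (starRingEnd ℂ)).eval z⁻¹ := by ring
  set w : ℂ := ((starRingEnd ℂ) z)⁻¹ with hw
  have hcz0 : (starRingEnd ℂ) z ≠ 0 := by
    simp [hz0]
  have hwz : (starRingEnd ℂ) z * w = 1 := mul_inv_cancel₀ hcz0
  -- abs of Q* eval
  have hnp : ∀ t : Multiset ℂ, ‖t.prod‖ = (t.map (fun x => ‖x‖)).prod :=
    fun t => map_multiset_prod (normHom : ℂ →*₀ ℝ) t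
  have habsstar : ‖((Q.map (starRingEnd ℂ)).reverse).eval z‖ =
      ‖a‖ *
        ((‖z‖) ^ m * (s.map fun ρ => ‖w - ρ‖).prod) := by
    rw [hrev, hconj, map_inv₀]
    rw [norm_mul, norm_pow, Complex.norm_conj, ← hw, heval w, norm_mul]
    rw [hnp, Multiset.map_map]
    simp only [Function.comp]
    ring
  -- fold |z|^m into the product
  have hfold : (‖z‖) ^ m * (s.map fun ρ => ‖w - ρ‖).prod =
      (s.map fun ρ => ‖1 - ρ * (starRingEnd ℂ) z‖).prod := by
    have hzpow : (‖z‖) ^ m = (s.map fun _ => ‖z‖).prod := by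
      rw [Multiset.map_const', Multiset.prod_replicate, hcard]
    rw [hzpow, ← Multiset.prod_map_mul]
    congr 1
    refine Multiset.map_congr rfl ?_
    intro ρ _
    have h3 : (starRingEnd ℂ) z * (w - ρ) = 1 - ρ * (starRingEnd ℂ) z := by
      rw [mul_sub, hwz]; ring
    rw [← Complex.norm_conj z, ← norm_mul, h3]
  -- abs of z^m * Q z
  have habsP : ‖z ^ m * Q.eval z‖ =
      ‖a‖ * ((‖z‖) ^ m * (s.map fun ρ => ‖z - ρ‖).prod) := by
    rw [norm_mul, norm_pow, heval z, norm_mul, hnp, Multiset.map_map]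
    simp only [Function.comp]
    ring
  -- the strict inequality
  have hlt : (s.map fun ρ => ‖1 - ρ * (starRingEnd ℂ) z‖).prod <
      (s.map fun ρ => ‖z - ρ‖).prod :=
    prod_lt_prod_aux s _ _ hsne (fun ρ _ => norm_nonneg _)
      (fun ρ hρ => blaschke_key (hmem ρ hρ) hz)
  have hzm1 : (1:ℝ) ≤ (‖z‖) ^ m := one_le_pow₀ (le_of_lt hz)
  have hprodnn : (0:ℝ) ≤ (s.map fun ρ => ‖z - ρ‖).prod :=
    Multiset.prod_nonneg (by
      intro x hx
      obtain ⟨y, _, rfl⟩ := Multiset.mem_map.mp hx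
      exact norm_nonneg _)
  have hA : 0 < ‖a‖ := by
    simpa [norm_pos_iff] using ha
  have hmain : ‖((Q.map (starRingEnd ℂ)).reverse).eval z‖ <
      ‖z ^ m * Q.eval z‖ := by
    rw [habsstar, hfold, habsP]
    have h4 : (s.map fun ρ => ‖z - ρ‖).prod ≤
        (‖z‖) ^ m * (s.map fun ρ => ‖z - ρ‖).prod :=
      le_mul_of_one_le_left hprodnn hzm1
    exact mul_lt_mul_of_pos_left (lt_of_lt_of_le hlt h4) hA
  -- contradiction
  have heq : z ^ m * Q.eval z =
      -(Complex.exp (θ * Complex.I) * ((Q.map (starRingEnd ℂ)).reverse).eval z) := by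
    linear_combination hcontra
  have : ‖z ^ m * Q.eval z‖ =
      ‖((Q.map (starRingEnd ℂ)).reverse).eval z‖ := by
    rw [heq, norm_neg, norm_mul, Complex.norm_exp_ofReal_mul_I, one_mul]
  linarith [hmain, this.le, this.ge]
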